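/- Let p > 1 be a real number. For all real numbers a₁, a₂, b₁, b₂, one has (Φ_p(b₂ − b₁) − Φ_p(a₂ − a₁))·((a₂ − b₂)⁺ − (a₁ − b₁)⁺) ≤ 0. -/
import Mathlib


/-- `Φ_p(t) = |t|^{p-2} t`. -/
noncomputable def Phi (p t : ℝ) : ℝ := |t| ^ (p - 2) * t

lemma Phi_nonneg_of_nonneg (p : ℝ) (hp : 1 < p) {t : ℝ} (ht : 0 ≤ t) :
    Phi p t = t ^ (p - 1) := by
  rcases eq_or_lt_of_le ht with h | h
  · simp [Phi, ← h, Real.zero_rpow (by linarith : p - 1 ≠ 0)]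
  · rw [Phi, abs_of_nonneg ht]
    nth_rewrite 2 [show t = t ^ (1:ℝ) by simp]
    rw [← Real.rpow_add h]
    ring_nf

lemma Phi_neg (p t : ℝ) : Phi p (-t) = - Phi p t := by
  simp [Phi]

lemma Phi_mono (p : ℝ) (hp : 1 < p) : Monotone (Phi p) := by
  intro x y hxy
  rcases le_total 0 x with hx | hx
  · rw [Phi_nonneg_of_nonneg p hp hx, Phi_nonneg_of_nonneg p hp (hx.trans hxy)]
    exact Real.rpow_le_rpow hx hxy (by linarith)
  · rcases le_total 0 y with hy | hy
    · rw [Phi_nonneg_of_nonneg p hp hy]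
      have h1 : Phi p x ≤ 0 := by
        have : (0:ℝ) ≤ |x| ^ (p - 2) := Real.rpow_nonneg (abs_nonneg x) _
        exact mul_nonpos_of_nonneg_of_nonpos this hx
      exact h1.trans (Real.rpow_nonneg hy _)
    · have ex : Phi p x = -((-x) ^ (p - 1)) := by
        have h := Phi_neg p x
        rw [Phi_nonneg_of_nonneg p hp (by linarith : (0:ℝ) ≤ -x)] at h
        linarith
      have ey : Phi p y = -((-y) ^ (p - 1)) := by
        have h := Phi_neg p y
        rw [Phi_nonneg_of_nonneg p hp (by linarith : (0:ℝ) ≤ -y)] at h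
        linarith
      rw [ex, ey, neg_le_neg_iff]
      exact Real.rpow_le_rpow (by linarith) (by linarith) (by linarith)

/-- Pointwise sign of the integrand when the positive part `(u − v)⁺` is used as a test
function in the proof of the comparison principle. -/
theorem Phi_monotone_posPart_pointwise (p : ℝ) (hp : 1 < p) (a₁ a₂ b₁ b₂ : ℝ) :
    (Phi p (b₂ - b₁) - Phi p (a₂ - a₁)) * (max (a₂ - b₂) 0 - max (a₁ - b₁) 0) ≤ 0 := by
  rcases le_total (a₂ - a₁) (b₂ - b₁) with h | h
  · have h1 : 0 ≤ Phi p (b₂ - b₁) - Phi p (a₂ - a₁) :=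
      sub_nonneg.mpr (Phi_mono p hp h)
    have h2 : max (a₂ - b₂) 0 - max (a₁ - b₁) 0 ≤ 0 :=
      sub_nonpos.mpr (max_le_max (by linarith) le_rfl)
    exact mul_nonpos_of_nonneg_of_nonpos h1 h2
  · have h1 : Phi p (b₂ - b₁) - Phi p (a₂ - a₁) ≤ 0 :=
      sub_nonpos.mpr (Phi_mono p hp h)
    have h2 : 0 ≤ max (a₂ - b₂) 0 - max (a₁ - b₁) 0 :=
      sub_nonneg.mpr (max_le_max (by linarith) le_rfl)
    exact mul_nonpos_of_nonpos_of_nonneg h1 h2
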